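/- (Increasing phase of the catapult.) For all constants C > 0, C_u > 0 and C'_u > 0 there exist constants c₁ ≥ 3, c₂ > 0 and c₃ > 0, depending only on C, C_u and C'_u, with the following property: let m ≥ c₁ and let (u, v, w) be a system as in the context with u(0) ≤ C_u/m and δ := v(0) − 2 satisfying c₂·(log m)/√m ≤ δ ≤ 2 − c₂·(log m)/√m. Then for every T ∈ ℕ such that u(t) ≤ C'_u·δ²/log m for all 0 ≤ t ≤ T, the following hold: (i) for all 0 ≤ t < T, u(t+1) ≥ (1 + δ − c₃·δ/log m)²·u(t), and (1 + δ − c₃·δ/log m)² > 1 (so u increases exponentially); (ii) for all 0 ≤ t ≤ T, |v(t) − v(0)| ≤ c₃·δ/log m. -/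

import Mathlib

set_option maxHeartbeats 1000000 in


/-- **Increasing phase of the catapult.**  For all `C, C_u, C'_u > 0` there are
constants `c₁ ≥ 3`, `c₂ > 0`, `c₃ > 0` such that for every `m ≥ c₁` and every
catapult system `(u, v, w)` with `u 0 ≤ C_u/m` and
`δ := v 0 − 2 ∈ [c₂·log m/√m, 2 − c₂·log m/√m]`, and every `T` such that
`u t ≤ C'_u·δ²/log m` for all `t ≤ T`:
(i) `u` increases exponentially with ratio at least `(1 + δ − c₃·δ/log m)² > 1`
on `[0, T)`, and (ii) `|v t − v 0| ≤ c₃·δ/log m` on `[0, T]`. -/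
theorem nqm_catapult_increasing_phase :
    ∀ C Cu Cu' : ℝ, 0 < C → 0 < Cu → 0 < Cu' →
    ∃ c₁ c₂ c₃ : ℝ, 3 ≤ c₁ ∧ 0 < c₂ ∧ 0 < c₃ ∧
      ∀ m : ℝ, c₁ ≤ m →
      ∀ u v w : ℕ → ℝ,
        (∀ t, 0 ≤ u t) →
        (∀ t, 0 ≤ v t) →
        (∀ t, (w t) ^ 2 = C ^ 2 * u t / m) →
        (∀ t, u (t+1) = (1 - v t + u t + w t) ^ 2 * u t) →
        (∀ t, v (t+1) = v t - u t * (4 - v t) - 4 * w t) →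
        u 0 ≤ Cu / m →
        c₂ * Real.log m / Real.sqrt m ≤ v 0 - 2 →
        v 0 - 2 ≤ 2 - c₂ * Real.log m / Real.sqrt m →
        ∀ T : ℕ, (∀ t ≤ T, u t ≤ Cu' * (v 0 - 2) ^ 2 / Real.log m) →
          (1 < (1 + (v 0 - 2) - c₃ * (v 0 - 2) / Real.log m) ^ 2 ∧
           (∀ t < T,
              (1 + (v 0 - 2) - c₃ * (v 0 - 2) / Real.log m) ^ 2 * u t ≤ u (t+1)) ∧
           (∀ t ≤ T, |v t - v 0| ≤ c₃ * (v 0 - 2) / Real.log m)) := by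
  intro C Cu Cu' hC hCu hCu'
  set c₃ : ℝ := 26 * (1 + C) * (1 + Cu') with hc3def
  have hc3pos : 0 < c₃ := by positivity
  have hc3_26 : 26 ≤ c₃ := by nlinarith [hC.le, hCu'.le, mul_pos hC hCu']
  refine ⟨max 3 (Real.exp (2 * c₃)), 1, c₃, le_max_left _ _, one_pos, hc3pos, ?_⟩
  intro m hm u v w hu hv hw hU hV hu0 hlb hub T hT
  set δ : ℝ := v 0 - 2 with hδdef
  set L : ℝ := Real.log m with hLdef
  clear_value c₃ δ L
  -- basic facts
  have hm3 : (3:ℝ) ≤ m := le_trans (le_max_left _ _) hm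
  have hm0 : (0:ℝ) < m := by linarith
  have hLge : 2 * c₃ ≤ L := by
    rw [hLdef]
    exact (Real.le_log_iff_exp_le hm0).mpr (le_trans (le_max_right _ _) hm)
  have hLpos : 0 < L := by linarith
  have hsm : 0 < Real.sqrt m := Real.sqrt_pos.mpr hm0
  have hlb' : L / Real.sqrt m ≤ δ := by rw [one_mul] at hlb; exact hlb
  have hδpos : 0 < δ := lt_of_lt_of_le (by positivity) hlb'
  have hδ2 : δ ≤ 2 := by
    have h0 : 0 < L / Real.sqrt m := by positivity
    rw [one_mul] at hub; linarith
  have hLδm : L ≤ δ * Real.sqrt m := (div_le_iff₀ hsm).mp hlb'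
  have h1L : 1 ≤ Real.sqrt L := by
    have h1 : Real.sqrt 1 ≤ Real.sqrt L := Real.sqrt_le_sqrt (by linarith)
    rwa [Real.sqrt_one] at h1
  have hsqCu' : Real.sqrt Cu' ≤ 1 + Cu' := by
    have h1 : Real.sqrt Cu' ≤ Real.sqrt ((1 + Cu')^2) :=
      Real.sqrt_le_sqrt (by linarith only [sq_nonneg Cu', hCu'.le])
    rwa [Real.sqrt_sq (by positivity)] at h1
  have hEhalf : c₃ * δ / L ≤ δ / 2 := by
    rw [div_le_iff₀ hLpos]
    have := mul_le_mul_of_nonneg_left hLge hδpos.le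
    linarith only [this]
  -- |w t| formula
  have hwabs : ∀ t, |w t| = C * Real.sqrt (u t) / Real.sqrt m := by
    intro t
    have h1 : (w t)^2 = (C * Real.sqrt (u t) / Real.sqrt m)^2 := by
      rw [hw t, div_pow, mul_pow, Real.sq_sqrt (hu t), Real.sq_sqrt hm0.le]
    calc |w t| = Real.sqrt ((w t)^2) := (Real.sqrt_sq_eq_abs _).symm
    _ = _ := by rw [h1, Real.sqrt_sq (by positivity)]
  -- sqrt bound
  have hsu : ∀ t, u t ≤ Cu' * δ^2 / L →
      Real.sqrt (u t) ≤ Real.sqrt Cu' * δ / Real.sqrt L := by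
    intro t h
    have heq : Cu' * δ^2 / L = (Real.sqrt Cu' * δ / Real.sqrt L)^2 := by
      rw [div_pow, mul_pow, Real.sq_sqrt hCu'.le, Real.sq_sqrt hLpos.le]
    calc Real.sqrt (u t) ≤ Real.sqrt (Cu' * δ^2 / L) := Real.sqrt_le_sqrt h
    _ = _ := by rw [heq, Real.sqrt_sq (by positivity)]
  -- key step lemma
  have hstep : ∀ t, u t ≤ Cu' * δ^2 / L →
      |v t - v 0| ≤ 5/δ * u t + 12*C/(δ * Real.sqrt m) * Real.sqrt (u t) →
      ((1 + δ) * u t ≤ u (t+1) ∧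
       (1 + δ - c₃ * δ / L)^2 * u t ≤ u (t+1) ∧
       |v t - v 0| ≤ c₃ * δ / L) := by
    intro t h hinv
    have hsu' := hsu t h
    -- budget bounds
    have hb1 : u t ≤ 2 * Cu' * δ / L := by
      calc u t ≤ Cu' * δ^2 / L := h
      _ ≤ 2 * Cu' * δ / L := by
          rw [div_le_div_iff₀ hLpos hLpos]
          have := mul_le_mul_of_nonneg_left hδ2
            (mul_nonneg (mul_nonneg hCu'.le hδpos.le) hLpos.le)
          linarith only [this]
    have hb2 : |w t| ≤ 2 * C * (1 + Cu') * δ / L := by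
      rw [hwabs t]
      have hsu2 : Real.sqrt (u t) ≤ 2 * Real.sqrt Cu' := by
        calc Real.sqrt (u t) ≤ Real.sqrt Cu' * δ / Real.sqrt L := hsu'
        _ ≤ Real.sqrt Cu' * δ := div_le_self (by positivity) h1L
        _ ≤ 2 * Real.sqrt Cu' := by
            have := mul_le_mul_of_nonneg_left hδ2 (Real.sqrt_nonneg Cu')
            linarith only [this]
      have h1m : 1 / Real.sqrt m ≤ δ / L := by
        rw [div_le_div_iff₀ hsm hLpos]; linarith
      calc C * Real.sqrt (u t) / Real.sqrt m
          = (C * Real.sqrt (u t)) * (1 / Real.sqrt m) := by ring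
      _ ≤ (C * (2 * Real.sqrt Cu')) * (δ / L) := by
          apply mul_le_mul _ h1m (by positivity) (by positivity)
          exact mul_le_mul_of_nonneg_left hsu2 hC.le
      _ ≤ (2 * C * (1 + Cu')) * (δ / L) := by
          apply mul_le_mul_of_nonneg_right _ (by positivity)
          have := mul_le_mul_of_nonneg_left hsqCu' hC.le
          linarith only [this]
      _ = 2 * C * (1 + Cu') * δ / L := by ring
    -- bound on |v t - v 0| in δ/L units
    have e1 : 5 / δ * u t ≤ 5 * Cu' * δ / L := by
      have h2 := mul_le_mul_of_nonneg_left h (show (0:ℝ) ≤ 5/δ by positivity)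
      have heq : 5 / δ * (Cu' * δ^2 / L) = 5 * Cu' * δ / L := by
        field_simp
      linarith
    have e2 : 12 * C / (δ * Real.sqrt m) * Real.sqrt (u t) ≤ 12 * C * (1 + Cu') * δ / L := by
      have step1 : 12*C/(δ * Real.sqrt m) * Real.sqrt (u t)
          ≤ 12*C/(δ * Real.sqrt m) * (Real.sqrt Cu' * δ / Real.sqrt L) :=
        mul_le_mul_of_nonneg_left hsu' (by positivity)
      have step2 : 12*C/(δ * Real.sqrt m) * (Real.sqrt Cu' * δ / Real.sqrt L)
          = 12 * C * Real.sqrt Cu' / (Real.sqrt m * Real.sqrt L) := by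
        field_simp
      have hLL : L ≤ δ * Real.sqrt m * Real.sqrt L := by
        have h9 := mul_le_mul_of_nonneg_left h1L (mul_nonneg hδpos.le hsm.le)
        have h8 := mul_le_mul_of_nonneg_right hLδm (Real.sqrt_nonneg L)
        linarith only [h9, h8, hLδm]
      have step3 : 12 * C * Real.sqrt Cu' / (Real.sqrt m * Real.sqrt L)
          ≤ 12 * C * (1 + Cu') * δ / L := by
        rw [div_le_div_iff₀ (by positivity) hLpos]
        have hmm := mul_le_mul hsqCu' hLL hLpos.le (by positivity : (0:ℝ) ≤ 1 + Cu')
        have := mul_le_mul_of_nonneg_left hmm (by positivity : (0:ℝ) ≤ 12 * C)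
        linarith only [this]
      linarith [step1, step2 ▸ step1]
    have hA : |v t - v 0| ≤ (5 * Cu' + 12 * C * (1 + Cu')) * δ / L := by
      have : (5 * Cu' + 12 * C * (1 + Cu')) * δ / L
          = 5 * Cu' * δ / L + 12 * C * (1 + Cu') * δ / L := by ring
      linarith [hinv, e1, e2]
    -- total budget
    have hbudget : |v t - v 0| + u t + |w t| ≤ c₃ * δ / L := by
      have hfin : (5 * Cu' + 12 * C * (1 + Cu')) * δ / L + 2 * Cu' * δ / L
          + 2 * C * (1 + Cu') * δ / L ≤ c₃ * δ / L := by
        rw [← add_div, ← add_div]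
        apply (div_le_div_iff_of_pos_right hLpos).mpr
        have hcoef : 5 * Cu' + 12 * C * (1 + Cu') + 2 * Cu' + 2 * C * (1 + Cu') ≤ c₃ := by
          nlinarith [hC.le, hCu'.le, mul_nonneg hC.le hCu'.le]
        have := mul_le_mul_of_nonneg_right hcoef hδpos.le
        linarith only [this]
      linarith [hA, hb1, hb2]
    have hE : |v t - v 0| ≤ c₃ * δ / L := by
      have := abs_nonneg (w t); linarith [hu t]
    -- bracket bound
    have h1 : v 0 - v t ≤ |v t - v 0| := by rw [abs_sub_comm]; exact le_abs_self _
    have h2 : w t ≤ |w t| := le_abs_self _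
    have hBle : 1 - v t + u t + w t ≤ -(1 + δ) + c₃ * δ / L := by
      have hδeq : δ = v 0 - 2 := hδdef
      linarith
    have hr2 : 0 ≤ 1 + δ - c₃ * δ / L := by linarith
    have hsq1 : (1 + δ - c₃ * δ / L)^2 ≤ (1 - v t + u t + w t)^2 := by
      have h4 : 1 + δ - c₃ * δ / L ≤ -(1 - v t + u t + w t) := by linarith only [hBle]
      have h5 := mul_self_le_mul_self hr2 h4
      linarith only [h5]
    have hsq2 : 1 + δ ≤ (1 - v t + u t + w t)^2 := by
      have h4 : 1 + δ/2 ≤ -(1 - v t + u t + w t) := by linarith only [hBle, hEhalf]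
      have h5 := mul_self_le_mul_self (by linarith only [hδpos] : (0:ℝ) ≤ 1 + δ/2) h4
      linarith only [h5, sq_nonneg δ]
    refine ⟨?_, ?_, hE⟩
    · rw [hU t]; exact mul_le_mul_of_nonneg_right hsq2 (hu t)
    · rw [hU t]; exact mul_le_mul_of_nonneg_right hsq1 (hu t)
  -- main induction : the invariant
  have hmain : ∀ t, t ≤ T →
      |v t - v 0| ≤ 5/δ * u t + 12*C/(δ * Real.sqrt m) * Real.sqrt (u t) := by
    intro t
    induction t with
    | zero =>
        intro _
        have h0 := hu 0
        simp only [sub_self, abs_zero]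
        positivity
    | succ n ih =>
      intro hn1
      have hn : n ≤ T := Nat.le_of_succ_le hn1
      have hinv := ih hn
      have hun := hT n hn
      obtain ⟨hg1, _, hE⟩ := hstep n hun hinv
      have hEhalf1 : c₃ * δ / L ≤ 1 := by linarith
      -- |4 - v n| ≤ 5
      have hv4 : |4 - v n| ≤ 5 := by
        have h1 := hv n
        have h2 : v n - v 0 ≤ |v n - v 0| := le_abs_self _
        have h3 : -(|v n - v 0|) ≤ v n - v 0 := neg_abs_le _
        rw [abs_le]
        refine ⟨by linarith, by linarith⟩
      have hm1 : u n * (4 - v n) ≤ 5 * u n := by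
        have := mul_le_mul_of_nonneg_left (abs_le.mp hv4).2 (hu n)
        linarith
      have hm2 : -(5 * u n) ≤ u n * (4 - v n) := by
        have := mul_le_mul_of_nonneg_left (abs_le.mp hv4).1 (hu n)
        linarith
      have hΔv : |v (n+1) - v 0| ≤ |v n - v 0| + 5 * u n + 4 * |w n| := by
        rw [hV n, abs_le]
        refine ⟨?_, ?_⟩
        · linarith [neg_abs_le (v n - v 0), le_abs_self (w n), neg_abs_le (w n), hm1, hm2]
        · linarith [le_abs_self (v n - v 0), le_abs_self (w n), neg_abs_le (w n), hm1, hm2]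
      -- sqrt growth
      have hsqstep : (1 + δ/3) * Real.sqrt (u n) ≤ Real.sqrt (u (n+1)) := by
        have hc : (1 + δ/3)^2 ≤ 1 + δ := by
          have := mul_le_mul_of_nonneg_left hδ2 hδpos.le
          linarith only [this, hδpos]
        have h1 : (1 + δ/3)^2 * u n ≤ u (n+1) := by
          calc (1 + δ/3)^2 * u n ≤ (1 + δ) * u n :=
                mul_le_mul_of_nonneg_right hc (hu n)
          _ ≤ u (n+1) := hg1
        calc (1 + δ/3) * Real.sqrt (u n) = Real.sqrt ((1 + δ/3)^2 * u n) := by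
              rw [Real.sqrt_mul (by positivity), Real.sqrt_sq (by positivity)]
        _ ≤ Real.sqrt (u (n+1)) := Real.sqrt_le_sqrt h1
      have hA1 : 5/δ * u n + 5 * u n ≤ 5/δ * u (n+1) := by
        have h2 := mul_le_mul_of_nonneg_left hg1 (show (0:ℝ) ≤ 5/δ by positivity)
        have heq : 5/δ * ((1 + δ) * u n) = 5/δ * u n + 5 * u n := by
          field_simp
        linarith
      have hA2 : 12*C/(δ * Real.sqrt m) * Real.sqrt (u n) + 4 * (C * Real.sqrt (u n) / Real.sqrt m)
          ≤ 12*C/(δ * Real.sqrt m) * Real.sqrt (u (n+1)) := by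
        have h2 := mul_le_mul_of_nonneg_left hsqstep
          (show (0:ℝ) ≤ 12*C/(δ * Real.sqrt m) by positivity)
        have heq : 12*C/(δ * Real.sqrt m) * ((1 + δ/3) * Real.sqrt (u n))
            = 12*C/(δ * Real.sqrt m) * Real.sqrt (u n) + 4 * (C * Real.sqrt (u n) / Real.sqrt m) := by
          field_simp; ring
        linarith
      have hwn := hwabs n
      calc |v (n+1) - v 0| ≤ |v n - v 0| + 5 * u n + 4 * |w n| := hΔv
      _ ≤ (5/δ * u n + 12*C/(δ * Real.sqrt m) * Real.sqrt (u n)) + 5 * u n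
            + 4 * (C * Real.sqrt (u n) / Real.sqrt m) := by rw [hwn] at *; linarith
      _ ≤ 5/δ * u (n+1) + 12*C/(δ * Real.sqrt m) * Real.sqrt (u (n+1)) := by linarith
  refine ⟨?_, ?_, ?_⟩
  · have h1 : 1 + δ/2 ≤ 1 + δ - c₃ * δ / L := by linarith only [hEhalf]
    have h0 : (0:ℝ) ≤ 1 + δ/2 := by linarith only [hδpos]
    have hsq : (1 + δ/2)^2 ≤ (1 + δ - c₃ * δ / L)^2 := pow_le_pow_left₀ h0 h1 2
    have h2 : (1:ℝ) < (1 + δ/2)^2 := by linarith only [hδpos, sq_nonneg δ]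
    linarith only [hsq, h2]
  · intro t ht
    exact (hstep t (hT t ht.le) (hmain t ht.le)).2.1
  · intro t ht
    exact (hstep t (hT t ht) (hmain t ht)).2.2
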